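/- Potential-gradient identity: in a Markov potential game, for every initial distribution μ with Φ(μ,π) = ∑_s μ(s)Φ(s,π), and all i, s, a_i, the partial derivatives satisfy ∂Φ(μ,π)/∂π_i(s,a_i) = ∂V_i(μ,π)/∂π_i(s,a_i) = (1/(1−δ)) d_μ^π(s) Q_i(s,a_i;π). -/

import Mathlib

set_option linter.unusedSectionVars false


open Finset

namespace MPG

def simplex {α : Type*} [Fintype α] (p : α → ℝ) : Prop :=
  (∀ x, 0 ≤ p x) ∧ ∑ x, p x = 1

variable {S I : Type*} {A : I → Type*}
variable [Fintype S] [DecidableEq S] [Fintype I] [DecidableEq I]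
  [∀ i, Fintype (A i)] [∀ i, DecidableEq (A i)]

def IsPolicy (π : ∀ i, S → A i → ℝ) : Prop := ∀ i s, simplex (π i s)

def IsKernel (P : S → (∀ i, A i) → S → ℝ) : Prop := ∀ s a, simplex (P s a)

noncomputable def jointProb (π : ∀ i, S → A i → ℝ) (s : S) (a : ∀ i, A i) : ℝ :=
  ∏ i, π i s (a i)

noncomputable def stepDist (P : S → (∀ i, A i) → S → ℝ) (π : ∀ i, S → A i → ℝ)
    (ν : S → ℝ) : S → ℝ :=
  fun s' => ∑ s, ν s * ∑ a, jointProb π s a * P s a s'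

noncomputable def expReward (f : S → (∀ i, A i) → ℝ) (π : ∀ i, S → A i → ℝ)
    (ν : S → ℝ) : ℝ :=
  ∑ s, ν s * ∑ a, jointProb π s a * f s a

def dirac (s : S) : S → ℝ := fun s' => if s' = s then 1 else 0

/-- Value function: expected total discounted payoff of player `i` starting at `s`. -/
noncomputable def V (u : I → S → (∀ i, A i) → ℝ) (P : S → (∀ i, A i) → S → ℝ)
    (δ : ℝ) (π : ∀ i, S → A i → ℝ) (i : I) (s : S) : ℝ :=
  ∑' k : ℕ, δ ^ k * expReward (u i) π ((stepDist P π)^[k] (dirac s))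

def pureAt {i : I} (ai : A i) : S → A i → ℝ := fun _ b => if b = ai then 1 else 0

/-- The policy profile where player `i` deterministically plays `ai`. -/
noncomputable def devPolicy (π : ∀ i, S → A i → ℝ) (i : I) (ai : A i) :
    ∀ j, S → A j → ℝ :=
  Function.update π i (pureAt ai)

/-- Q-function: one-stage deviation value of player `i`. -/
noncomputable def Q (u : I → S → (∀ i, A i) → ℝ) (P : S → (∀ i, A i) → S → ℝ)
    (δ : ℝ) (π : ∀ i, S → A i → ℝ) (i : I) (s : S) (ai : A i) : ℝ :=
  ∑ a, jointProb (devPolicy π i ai) s a *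
    (u i s a + δ * ∑ s', P s a s' * V u P δ π i s')

noncomputable def Vmu (u : I → S → (∀ i, A i) → ℝ) (P : S → (∀ i, A i) → S → ℝ)
    (δ : ℝ) (π : ∀ i, S → A i → ℝ) (i : I) (μ : S → ℝ) : ℝ :=
  ∑ s, μ s * V u P δ π i s

/-- Discounted state visitation distribution. -/
noncomputable def dvisit (P : S → (∀ i, A i) → S → ℝ) (δ : ℝ)
    (π : ∀ i, S → A i → ℝ) (μ : S → ℝ) (s : S) : ℝ :=
  (1 - δ) * ∑ s0, μ s0 * ∑' k : ℕ, δ ^ k * ((stepDist P π)^[k] (dirac s0)) s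

/-- Stationary Nash equilibrium. -/
def IsNash (u : I → S → (∀ i, A i) → ℝ) (P : S → (∀ i, A i) → S → ℝ)
    (δ : ℝ) (π : ∀ i, S → A i → ℝ) : Prop :=
  IsPolicy π ∧ ∀ (i : I) (πi : S → A i → ℝ), (∀ s, simplex (πi s)) →
    ∀ μ : S → ℝ, simplex μ →
      Vmu u P δ (Function.update π i πi) i μ ≤ Vmu u P δ π i μ


noncomputable def updateEntry (π : ∀ i, S → A i → ℝ) (i : I) (s : S) (ai : A i)
    (t : ℝ) : ∀ j, S → A j → ℝ :=
  Function.update π i (fun s' b => if s' = s ∧ b = ai then t else π i s' b)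


/-! ### Auxiliary infrastructure -/

noncomputable def Wmat (P : S → (∀ i, A i) → S → ℝ) (π : ∀ i, S → A i → ℝ) :
    Matrix S S ℝ :=
  Matrix.of fun s0 s' => ∑ a, jointProb π s0 a * P s0 a s'

noncomputable def rvec (f : S → (∀ i, A i) → ℝ) (π : ∀ i, S → A i → ℝ) : S → ℝ :=
  fun s0 => ∑ a, jointProb π s0 a * f s0 a

@[simp] lemma Wmat_apply (P : S → (∀ i, A i) → S → ℝ) (π : ∀ i, S → A i → ℝ)
    (s0 s' : S) : Wmat P π s0 s' = ∑ a, jointProb π s0 a * P s0 a s' := rfl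

lemma iterate_stepDist (P : S → (∀ i, A i) → S → ℝ) (π : ∀ i, S → A i → ℝ)
    (s0 : S) : ∀ (k : ℕ) (s' : S),
    ((stepDist P π)^[k] (dirac s0)) s' = (Wmat P π ^ k) s0 s' := by
  intro k
  induction k with
  | zero =>
    intro s'
    simp only [Function.iterate_zero, id, pow_zero, Matrix.one_apply, dirac]
    by_cases h : s' = s0
    · simp [h]
    · rw [if_neg h, if_neg fun h' => h h'.symm]
  | succ k ih =>
    intro s'
    rw [Function.iterate_succ_apply', pow_succ, Matrix.mul_apply]
    simp only [stepDist]
    exact Finset.sum_congr rfl fun s1 _ => by rw [ih s1]; rfl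

lemma V_eq_tsum (u : I → S → (∀ i, A i) → ℝ) (P : S → (∀ i, A i) → S → ℝ) (δ : ℝ)
    (π : ∀ i, S → A i → ℝ) (i : I) (s0 : S) :
    V u P δ π i s0 = ∑' k : ℕ, δ ^ k * ∑ s', (Wmat P π ^ k) s0 s' * rvec (u i) π s' := by
  unfold V
  refine tsum_congr fun k => ?_
  congr 1
  unfold expReward rvec
  exact Finset.sum_congr rfl fun s' _ => by rw [iterate_stepDist]

def RowB (M : Matrix S S ℝ) (c : ℝ) : Prop := ∀ s0, ∑ s', |M s0 s'| ≤ c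

lemma RowB.mono {M : Matrix S S ℝ} {c d : ℝ} (h : RowB M c) (hcd : c ≤ d) :
    RowB M d := fun s0 => (h s0).trans hcd

lemma RowB.entry {M : Matrix S S ℝ} {c : ℝ} (h : RowB M c) (s0 s' : S) :
    |M s0 s'| ≤ c :=
  le_trans (Finset.single_le_sum (f := fun s'' => |M s0 s''|)
    (fun _ _ => abs_nonneg _) (Finset.mem_univ s')) (h s0)

lemma RowB.mul {M N : Matrix S S ℝ} {c d : ℝ} (hM : RowB M c) (hN : RowB N d)
    (hd : 0 ≤ d) : RowB (M * N) (c * d) := by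
  intro s0
  calc ∑ s', |(M * N) s0 s'| ≤ ∑ s', ∑ s1, |M s0 s1| * |N s1 s'| := by
        refine Finset.sum_le_sum fun s' _ => ?_
        rw [Matrix.mul_apply]
        exact (Finset.abs_sum_le_sum_abs _ _).trans
          (le_of_eq (Finset.sum_congr rfl fun s1 _ => abs_mul _ _))
    _ = ∑ s1, |M s0 s1| * ∑ s', |N s1 s'| := by
        rw [Finset.sum_comm]
        exact Finset.sum_congr rfl fun s1 _ => (Finset.mul_sum _ _ _).symm
    _ ≤ ∑ s1, |M s0 s1| * d :=
        Finset.sum_le_sum fun s1 _ => mul_le_mul_of_nonneg_left (hN s1) (abs_nonneg _)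
    _ = (∑ s1, |M s0 s1|) * d := (Finset.sum_mul _ _ _).symm
    _ ≤ c * d := mul_le_mul_of_nonneg_right (hM s0) hd

lemma RowB.pow {M : Matrix S S ℝ} {c : ℝ} (hM : RowB M c) (hc : 0 ≤ c) :
    ∀ k : ℕ, RowB (M ^ k) (c ^ k)
  | 0 => by
      intro s0
      simp [Matrix.one_apply, apply_ite abs]
  | (k + 1) => by
      rw [pow_succ, pow_succ]
      exact (RowB.pow hM hc k).mul hM hc

lemma abs_dot_le {M : Matrix S S ℝ} {c : ℝ} (hM : RowB M c) {v : S → ℝ} {Bv : ℝ}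
    (hv : ∀ s', |v s'| ≤ Bv) (hBv : 0 ≤ Bv) (s0 : S) :
    |∑ s', M s0 s' * v s'| ≤ c * Bv := by
  calc |∑ s', M s0 s' * v s'| ≤ ∑ s', |M s0 s'| * |v s'| :=
        (Finset.abs_sum_le_sum_abs _ _).trans
          (le_of_eq (Finset.sum_congr rfl fun s' _ => abs_mul _ _))
    _ ≤ ∑ s', |M s0 s'| * Bv :=
        Finset.sum_le_sum fun s' _ => mul_le_mul_of_nonneg_left (hv s') (abs_nonneg _)
    _ = (∑ s', |M s0 s'|) * Bv := (Finset.sum_mul _ _ _).symm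
    _ ≤ c * Bv := mul_le_mul_of_nonneg_right (hM s0) hBv

lemma abs_term_le {δ : ℝ} (hδ : 0 ≤ δ) {M : Matrix S S ℝ} {c : ℝ} (hM : RowB M c)
    (hc : 0 ≤ c) {v : S → ℝ} {Bv : ℝ} (hv : ∀ s', |v s'| ≤ Bv) (hBv : 0 ≤ Bv)
    (s0 : S) (k : ℕ) :
    |δ ^ k * ∑ s', (M ^ k) s0 s' * v s'| ≤ (δ * c) ^ k * Bv := by
  rw [abs_mul, abs_pow, abs_of_nonneg hδ, mul_pow, mul_assoc]
  exact mul_le_mul_of_nonneg_left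
    ((abs_dot_le (hM.pow hc k) hv hBv s0)) (pow_nonneg hδ k)

lemma summable_term {δ : ℝ} (hδ0 : 0 ≤ δ) {M : Matrix S S ℝ} {c : ℝ}
    (hM : RowB M c) (hc : 0 ≤ c) (hδc : δ * c < 1) {v : S → ℝ} {Bv : ℝ}
    (hv : ∀ s', |v s'| ≤ Bv) (hBv : 0 ≤ Bv) (s0 : S) :
    Summable (fun k : ℕ => δ ^ k * ∑ s', (M ^ k) s0 s' * v s') := by
  refine Summable.of_norm_bounded
    ((summable_geometric_of_lt_one (mul_nonneg hδ0 hc) hδc).mul_right Bv) fun k => ?_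
  exact abs_term_le hδ0 hM hc hv hBv s0 k


lemma jointProb_nonneg {π : ∀ i, S → A i → ℝ} (hπ : IsPolicy π) (s0 : S)
    (a : ∀ i, A i) : 0 ≤ jointProb π s0 a :=
  Finset.prod_nonneg fun j _ => (hπ j s0).1 (a j)

lemma sum_jointProb {π : ∀ i, S → A i → ℝ} (hπ : IsPolicy π) (s0 : S) :
    ∑ a, jointProb π s0 a = 1 := by
  unfold jointProb
  calc ∑ a : (∀ j, A j), ∏ j, π j s0 (a j)
      = ∑ a ∈ Fintype.piFinset (fun _ => Finset.univ), ∏ j, π j s0 (a j) := by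
        rw [Fintype.piFinset_univ]
    _ = ∏ j, ∑ b, π j s0 b := (Finset.prod_univ_sum _ _).symm
    _ = 1 := by
        rw [Finset.prod_congr rfl fun j _ => (hπ j s0).2]
        simp

lemma sum_abs_jointProb {π : ∀ i, S → A i → ℝ} (hπ : IsPolicy π) (s0 : S) :
    ∑ a, |jointProb π s0 a| = 1 := by
  rw [Finset.sum_congr rfl fun a _ => abs_of_nonneg (jointProb_nonneg hπ s0 a)]
  exact sum_jointProb hπ s0

lemma simplex_pureAt {i : I} (ai : A i) (s0 : S) :
    simplex (pureAt (S := S) ai s0) := by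
  constructor
  · intro b
    unfold pureAt
    split <;> norm_num
  · simp [pureAt]

lemma isPolicy_devPolicy {π : ∀ i, S → A i → ℝ} (hπ : IsPolicy π) (i : I)
    (ai : A i) : IsPolicy (devPolicy π i ai) := by
  intro j s0
  unfold devPolicy
  by_cases h : j = i
  · subst h
    rw [Function.update_self]
    exact simplex_pureAt ai s0
  · rw [Function.update_of_ne h]
    exact hπ j s0

lemma rowB_Wmat {P : S → (∀ i, A i) → S → ℝ} {π : ∀ i, S → A i → ℝ}
    (hP : IsKernel P) (hπ : IsPolicy π) : RowB (Wmat P π) 1 := by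
  intro s0
  have hnn : ∀ s', 0 ≤ Wmat P π s0 s' := fun s' =>
    Finset.sum_nonneg fun a _ =>
      mul_nonneg (jointProb_nonneg hπ _ _) ((hP s0 a).1 s')
  refine le_of_eq ?_
  calc ∑ s', |Wmat P π s0 s'| = ∑ s', Wmat P π s0 s' :=
        Finset.sum_congr rfl fun s' _ => abs_of_nonneg (hnn s')
    _ = ∑ a, jointProb π s0 a * ∑ s', P s0 a s' := by
        simp only [Wmat_apply]
        rw [Finset.sum_comm]
        exact Finset.sum_congr rfl fun a _ => (Finset.mul_sum _ _ _).symm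
    _ = ∑ a, jointProb π s0 a :=
        Finset.sum_congr rfl fun a _ => by rw [(hP s0 a).2, mul_one]
    _ = 1 := sum_jointProb hπ s0

lemma updateEntry_self (π : ∀ i, S → A i → ℝ) (i : I) (s : S) (ai : A i) :
    updateEntry π i s ai (π i s ai) = π := by
  unfold updateEntry
  have h : (fun s' b => if s' = s ∧ b = ai then π i s ai else π i s' b) = π i := by
    funext s' b
    split
    · next h => rw [h.1, h.2]
    · rfl
  rw [h, Function.update_eq_self]

lemma jointProb_updateEntry (π : ∀ i, S → A i → ℝ) (i : I) (s : S) (ai : A i)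
    (t : ℝ) (s0 : S) (a : ∀ j, A j) :
    jointProb (updateEntry π i s ai t) s0 a =
      jointProb π s0 a +
        (if s0 = s then (t - π i s ai) * jointProb (devPolicy π i ai) s0 a
          else 0) := by
  unfold jointProb
  have herase : ∀ (g : ∀ j, S → A j → ℝ), (∀ j, j ≠ i → g j = π j) →
      ∏ j ∈ Finset.univ.erase i, g j s0 (a j)
        = ∏ j ∈ Finset.univ.erase i, π j s0 (a j) :=
    fun g hg => Finset.prod_congr rfl fun j hj => by
      rw [hg j (Finset.mem_erase.1 hj).1]
  have h1 : ∏ j, updateEntry π i s ai t j s0 (a j) =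
      (if s0 = s ∧ a i = ai then t else π i s0 (a i)) *
        ∏ j ∈ Finset.univ.erase i, π j s0 (a j) := by
    rw [← Finset.mul_prod_erase Finset.univ _ (Finset.mem_univ i),
      herase _ (fun j hj => Function.update_of_ne hj _ _)]
    unfold updateEntry
    rw [Function.update_self]
  have h2 : ∏ j, π j s0 (a j) =
      π i s0 (a i) * ∏ j ∈ Finset.univ.erase i, π j s0 (a j) :=
    (Finset.mul_prod_erase Finset.univ _ (Finset.mem_univ i)).symm
  have h3 : ∏ j, devPolicy π i ai j s0 (a j) =
      (if a i = ai then (1:ℝ) else 0) * ∏ j ∈ Finset.univ.erase i, π j s0 (a j) := by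
    rw [← Finset.mul_prod_erase Finset.univ _ (Finset.mem_univ i),
      herase _ (fun j hj => Function.update_of_ne hj _ _)]
    unfold devPolicy
    rw [Function.update_self]
    rfl
  rw [h1, h2, h3]
  by_cases hs : s0 = s
  · by_cases ha : a i = ai
    · subst hs; subst ha; simp; ring
    · simp [hs, ha]
  · simp [hs]

lemma sum_jp_mul_updateEntry (π : ∀ i, S → A i → ℝ) (i : I) (s : S) (ai : A i)
    (t : ℝ) (s0 : S) (F : (∀ j, A j) → ℝ) :
    ∑ a, jointProb (updateEntry π i s ai t) s0 a * F a =
      ∑ a, jointProb π s0 a * F a +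
        (if s0 = s then
          (t - π i s ai) * ∑ a, jointProb (devPolicy π i ai) s0 a * F a
        else 0) := by
  by_cases hs : s0 = s
  · subst hs
    simp [jointProb_updateEntry π i s0 ai t s0, add_mul,
      Finset.sum_add_distrib, Finset.mul_sum, mul_assoc]
  · simp only [jointProb_updateEntry π i s ai t s0, hs, if_false, add_zero]

lemma Wmat_updateEntry (P : S → (∀ i, A i) → S → ℝ) (π : ∀ i, S → A i → ℝ)
    (i : I) (s : S) (ai : A i) (t : ℝ) (s0 s' : S) :
    Wmat P (updateEntry π i s ai t) s0 s' =
      Wmat P π s0 s' +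
        (if s0 = s then (t - π i s ai) * Wmat P (devPolicy π i ai) s0 s'
          else 0) := by
  simp only [Wmat_apply]
  exact sum_jp_mul_updateEntry π i s ai t s0 (fun a => P s0 a s')

lemma rvec_updateEntry (u : I → S → (∀ i, A i) → ℝ) (π : ∀ i, S → A i → ℝ)
    (i : I) (s : S) (ai : A i) (t : ℝ) (s0 : S) :
    rvec (u i) (updateEntry π i s ai t) s0 =
      rvec (u i) π s0 +
        (if s0 = s then (t - π i s ai) * rvec (u i) (devPolicy π i ai) s0
          else 0) := by
  unfold rvec
  exact sum_jp_mul_updateEntry π i s ai t s0 (fun a => u i s0 a)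


lemma abs_u_le (u : I → S → (∀ i, A i) → ℝ) (i : I) (s1 : S) (a : ∀ j, A j) :
    |u i s1 a| ≤ ∑ s2, ∑ a2, |u i s2 a2| :=
  le_trans
    (Finset.single_le_sum (f := fun a2 => |u i s1 a2|)
      (fun a2 _ => abs_nonneg (u i s1 a2)) (Finset.mem_univ a))
    (Finset.single_le_sum (f := fun s2 => ∑ a2, |u i s2 a2|)
      (fun s2 _ => Finset.sum_nonneg fun a2 _ => abs_nonneg _) (Finset.mem_univ s1))

lemma abs_rvec_le {π' : ∀ i, S → A i → ℝ} {s0 : S} {c : ℝ}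
    (hrow : ∑ a, |jointProb π' s0 a| ≤ c) (f : S → (∀ j, A j) → ℝ) {Bf : ℝ}
    (hf : ∀ s1 a, |f s1 a| ≤ Bf) (hBf : 0 ≤ Bf) : |rvec f π' s0| ≤ c * Bf := by
  unfold rvec
  calc |∑ a, jointProb π' s0 a * f s0 a| ≤ ∑ a, |jointProb π' s0 a| * |f s0 a| :=
        (Finset.abs_sum_le_sum_abs _ _).trans
          (le_of_eq (Finset.sum_congr rfl fun a _ => abs_mul _ _))
    _ ≤ ∑ a, |jointProb π' s0 a| * Bf :=
        Finset.sum_le_sum fun a _ => mul_le_mul_of_nonneg_left (hf s0 a) (abs_nonneg _)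
    _ = (∑ a, |jointProb π' s0 a|) * Bf := (Finset.sum_mul _ _ _).symm
    _ ≤ c * Bf := mul_le_mul_of_nonneg_right hrow hBf

lemma sum_abs_jointProb_updateEntry {π : ∀ i, S → A i → ℝ} (hπ : IsPolicy π)
    (i : I) (s : S) (ai : A i) (t : ℝ) (s0 : S) :
    ∑ a, |jointProb (updateEntry π i s ai t) s0 a| ≤ 1 + |t - π i s ai| := by
  calc ∑ a, |jointProb (updateEntry π i s ai t) s0 a|
      ≤ ∑ a, (|jointProb π s0 a| +
          (if s0 = s then |t - π i s ai| * jointProb (devPolicy π i ai) s0 a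
            else 0)) := by
        refine Finset.sum_le_sum fun a _ => ?_
        rw [jointProb_updateEntry π i s ai t s0 a]
        refine (abs_add_le _ _).trans (add_le_add le_rfl ?_)
        by_cases hs : s0 = s
        · simp only [hs, if_true]
          rw [abs_mul, abs_of_nonneg (jointProb_nonneg (isPolicy_devPolicy hπ i ai) _ _)]
        · simp [hs]
    _ = 1 + (if s0 = s then
          |t - π i s ai| * ∑ a, jointProb (devPolicy π i ai) s0 a else 0) := by
        rw [Finset.sum_add_distrib, sum_abs_jointProb hπ s0]
        congr 1
        by_cases hs : s0 = s <;> simp [hs, Finset.mul_sum]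
    _ ≤ 1 + |t - π i s ai| := by
        refine add_le_add le_rfl ?_
        by_cases hs : s0 = s
        · simp only [hs, if_true]
          rw [sum_jointProb (isPolicy_devPolicy hπ i ai) s, mul_one]
        · simp [hs, abs_nonneg]

lemma rowB_Wmat_updateEntry {P : S → (∀ i, A i) → S → ℝ} {π : ∀ i, S → A i → ℝ}
    (hP : IsKernel P) (hπ : IsPolicy π) (i : I) (s : S) (ai : A i) (t : ℝ) :
    RowB (Wmat P (updateEntry π i s ai t)) (1 + |t - π i s ai|) := by
  intro s0
  have hdev : RowB (Wmat P (devPolicy π i ai)) 1 :=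
    rowB_Wmat hP (isPolicy_devPolicy hπ i ai)
  have hW : RowB (Wmat P π) 1 := rowB_Wmat hP hπ
  calc ∑ s', |Wmat P (updateEntry π i s ai t) s0 s'|
      ≤ ∑ s', (|Wmat P π s0 s'| +
          (if s0 = s then |t - π i s ai| * |Wmat P (devPolicy π i ai) s0 s'|
            else 0)) := by
        refine Finset.sum_le_sum fun s' _ => ?_
        rw [Wmat_updateEntry P π i s ai t s0 s']
        refine (abs_add_le _ _).trans (add_le_add le_rfl ?_)
        by_cases hs : s0 = s
        · simp only [hs, if_true]
          rw [abs_mul]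
        · simp [hs]
    _ = (∑ s', |Wmat P π s0 s'|) + (if s0 = s then
          |t - π i s ai| * ∑ s', |Wmat P (devPolicy π i ai) s0 s'| else 0) := by
        rw [Finset.sum_add_distrib]
        congr 1
        by_cases hs : s0 = s <;> simp [hs, Finset.mul_sum]
    _ ≤ 1 + |t - π i s ai| := by
        refine add_le_add (hW s0) ?_
        by_cases hs : s0 = s
        · simp only [hs, if_true]
          calc |t - π i s ai| * ∑ s', |Wmat P (devPolicy π i ai) s s'|
              ≤ |t - π i s ai| * 1 :=
                mul_le_mul_of_nonneg_left (hdev s) (abs_nonneg _)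
            _ = |t - π i s ai| := mul_one _
        · simp [hs, abs_nonneg]

lemma abs_tsum_le' {f g : ℕ → ℝ} (h : ∀ k, |f k| ≤ g k) (hg : Summable g) :
    |∑' k, f k| ≤ ∑' k, g k := by
  have habs : Summable fun k => |f k| :=
    hg.of_nonneg_of_le (fun k => abs_nonneg _) h
  have hf : Summable f := summable_abs_iff.mp habs
  refine abs_le.2 ⟨?_, Summable.tsum_le_tsum (fun k => (abs_le.1 (h k)).2) hf hg⟩
  have h1 : ∀ k, -g k ≤ f k := fun k => (abs_le.1 (h k)).1
  have := Summable.tsum_le_tsum h1 hg.neg hf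
  rwa [tsum_neg] at this

lemma abs_V_le (u : I → S → (∀ i, A i) → ℝ) (P : S → (∀ i, A i) → S → ℝ)
    {δ : ℝ} (hδ0 : 0 < δ) (hδ1 : δ < 1) (hP : IsKernel P)
    {π : ∀ i, S → A i → ℝ} (hπ : IsPolicy π) (i : I) (s0 : S) :
    |V u P δ π i s0| ≤ (∑ s1, ∑ a, |u i s1 a|) / (1 - δ) := by
  set B := ∑ s1, ∑ a, |u i s1 a| with hB
  have hB0 : 0 ≤ B := Finset.sum_nonneg fun s1 _ =>
    Finset.sum_nonneg fun a _ => abs_nonneg _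
  have hrb : ∀ s1, |rvec (u i) π s1| ≤ B := fun s1 => by
    simpa using abs_rvec_le (le_of_eq (sum_abs_jointProb hπ s1)) (u i)
      (abs_u_le u i) hB0
  have hbound : ∀ k : ℕ,
      |δ ^ k * ∑ s', ((Wmat P π) ^ k) s0 s' * rvec (u i) π s'| ≤ δ ^ k * B :=
    fun k => by
      simpa using abs_term_le hδ0.le (rowB_Wmat hP hπ) zero_le_one hrb hB0 s0 k
  have hgeo : Summable (fun k : ℕ => δ ^ k * B) :=
    (summable_geometric_of_lt_one hδ0.le hδ1).mul_right B
  rw [V_eq_tsum]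
  calc |∑' k : ℕ, δ ^ k * ∑ s', ((Wmat P π) ^ k) s0 s' * rvec (u i) π s'|
      ≤ ∑' k : ℕ, δ ^ k * B := abs_tsum_le' hbound hgeo
    _ = (1 - δ)⁻¹ * B := by
        rw [tsum_mul_right, tsum_geometric_of_lt_one hδ0.le hδ1, mul_comm]
    _ = B / (1 - δ) := by rw [mul_comm, ← div_eq_mul_inv]

lemma Q_eq (u : I → S → (∀ i, A i) → ℝ) (P : S → (∀ i, A i) → S → ℝ) (δ : ℝ)
    (π : ∀ i, S → A i → ℝ) (i : I) (s : S) (ai : A i) :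
    Q u P δ π i s ai =
      rvec (u i) (devPolicy π i ai) s +
        δ * ∑ s1, Wmat P (devPolicy π i ai) s s1 * V u P δ π i s1 := by
  unfold Q rvec
  simp only [mul_add, Finset.sum_add_distrib, Wmat_apply]
  congr 1
  simp only [Finset.mul_sum, Finset.sum_mul, mul_assoc]
  rw [Finset.sum_comm]
  refine Finset.sum_congr rfl fun s1 _ => Finset.sum_congr rfl fun a _ => by ring

lemma bellman (u : I → S → (∀ i, A i) → ℝ) (P : S → (∀ i, A i) → S → ℝ)
    {δ : ℝ} (hδ0 : 0 < δ) (hδ1 : δ < 1) (hP : IsKernel P)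
    {π : ∀ i, S → A i → ℝ} (hπ : IsPolicy π) (i : I) (s' : S) :
    V u P δ π i s' =
      rvec (u i) π s' + δ * ∑ s1, Wmat P π s' s1 * V u P δ π i s1 := by
  set B := ∑ s1, ∑ a, |u i s1 a| with hB
  have hB0 : 0 ≤ B := Finset.sum_nonneg fun s1 _ =>
    Finset.sum_nonneg fun a _ => abs_nonneg _
  have hrb : ∀ s1, |rvec (u i) π s1| ≤ B := fun s1 => by
    simpa using abs_rvec_le (le_of_eq (sum_abs_jointProb hπ s1)) (u i)
      (abs_u_le u i) hB0
  have hW : RowB (Wmat P π) 1 := rowB_Wmat hP hπ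
  have hsum : ∀ s1, Summable (fun k : ℕ =>
      δ ^ k * ∑ s'', ((Wmat P π) ^ k) s1 s'' * rvec (u i) π s'') := fun s1 =>
    summable_term hδ0.le hW zero_le_one (by simpa using hδ1) hrb hB0 s1
  rw [V_eq_tsum, Summable.tsum_eq_zero_add (hsum s')]
  have h0 : δ ^ 0 * ∑ s'', ((Wmat P π) ^ 0) s' s'' * rvec (u i) π s''
      = rvec (u i) π s' := by
    simp [Matrix.one_apply]
  rw [h0]
  congr 1
  have hterm : ∀ k : ℕ,
      δ ^ (k + 1) * ∑ s'', ((Wmat P π) ^ (k + 1)) s' s'' * rvec (u i) π s''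
        = ∑ s1, Wmat P π s' s1 *
            (δ * (δ ^ k * ∑ s'', ((Wmat P π) ^ k) s1 s'' * rvec (u i) π s'')) := by
    intro k
    rw [pow_succ' (Wmat P π) k]
    simp only [Matrix.mul_apply, Finset.sum_mul, Finset.mul_sum]
    rw [Finset.sum_comm]
    exact Finset.sum_congr rfl fun x _ => Finset.sum_congr rfl fun s'' _ => by ring
  rw [tsum_congr hterm, Summable.tsum_finsetSum (fun s1 _ => (((hsum s1).mul_left δ).mul_left _))]
  rw [Finset.mul_sum]
  refine Finset.sum_congr rfl fun s1 _ => ?_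
  rw [tsum_mul_left, tsum_mul_left, ← V_eq_tsum]
  ring


lemma V_diff (u : I → S → (∀ i, A i) → ℝ) (P : S → (∀ i, A i) → S → ℝ)
    {δ : ℝ} (hδ0 : 0 < δ) (hδ1 : δ < 1) (hP : IsKernel P)
    {π : ∀ i, S → A i → ℝ} (hπ : IsPolicy π) (i : I) (s : S) (ai : A i)
    (t : ℝ) (hc : δ * (1 + |t - π i s ai|) < 1) (s0 : S) :
    V u P δ (updateEntry π i s ai t) i s0 - V u P δ π i s0 =
      (t - π i s ai) * Q u P δ π i s ai *
        ∑' k : ℕ, δ ^ k * ((Wmat P (updateEntry π i s ai t)) ^ k) s0 s := by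
  have hc0 : (0:ℝ) ≤ 1 + |t - π i s ai| := by positivity
  have hrowW' : RowB (Wmat P (updateEntry π i s ai t)) (1 + |t - π i s ai|) :=
    rowB_Wmat_updateEntry hP hπ i s ai t
  have hB0 : (0:ℝ) ≤ ∑ s1, ∑ a, |u i s1 a| :=
    Finset.sum_nonneg fun s1 _ => Finset.sum_nonneg fun a _ => abs_nonneg _
  have hcB0 : (0:ℝ) ≤ (1 + |t - π i s ai|) * ∑ s1, ∑ a, |u i s1 a| :=
    mul_nonneg hc0 hB0
  have hr'b : ∀ s1, |rvec (u i) (updateEntry π i s ai t) s1| ≤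
      (1 + |t - π i s ai|) * ∑ s1, ∑ a, |u i s1 a| := fun s1 =>
    abs_rvec_le (sum_abs_jointProb_updateEntry hπ i s ai t s1) (u i)
      (abs_u_le u i) hB0
  have hVb : ∀ s1, |V u P δ π i s1| ≤ (∑ s1, ∑ a, |u i s1 a|) / (1 - δ) :=
    fun s1 => abs_V_le u P hδ0 hδ1 hP hπ i s1
  have hBV0 : (0:ℝ) ≤ (∑ s1, ∑ a, |u i s1 a|) / (1 - δ) :=
    div_nonneg hB0 (by linarith)
  set h : ℕ → ℝ := fun k => δ ^ k *
    ∑ s', ((Wmat P (updateEntry π i s ai t)) ^ k) s0 s' * V u P δ π i s'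
    with hhdef
  have hsum_r : Summable (fun k : ℕ => δ ^ k *
      ∑ s', ((Wmat P (updateEntry π i s ai t)) ^ k) s0 s' *
        rvec (u i) (updateEntry π i s ai t) s') :=
    summable_term hδ0.le hrowW' hc0 hc hr'b hcB0 s0
  have hsum_h : Summable h := summable_term hδ0.le hrowW' hc0 hc hVb hBV0 s0
  have hsum_h1 : Summable (fun k => h (k + 1)) := (summable_nat_add_iff 1).2 hsum_h
  have hsum_tel : Summable (fun k => h (k + 1) - h k) := hsum_h1.sub hsum_h
  have htend : Filter.Tendsto h Filter.atTop (nhds 0) := by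
    refine squeeze_zero_norm
      (a := fun k => (δ * (1 + |t - π i s ai|)) ^ k *
        ((∑ s1, ∑ a, |u i s1 a|) / (1 - δ))) (fun k => ?_) ?_
    · exact abs_term_le hδ0.le hrowW' hc0 hVb hBV0 s0 k
    · simpa using (tendsto_pow_atTop_nhds_zero_of_lt_one
        (mul_nonneg hδ0.le hc0) hc).mul_const ((∑ s1, ∑ a, |u i s1 a|) / (1 - δ))
  have hg : ∀ s', rvec (u i) (updateEntry π i s ai t) s' +
      δ * ∑ s1, Wmat P (updateEntry π i s ai t) s' s1 * V u P δ π i s1 -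
        V u P δ π i s'
      = if s' = s then (t - π i s ai) * Q u P δ π i s ai else 0 := by
    intro s'
    have hbell : V u P δ π i s' =
        rvec (u i) π s' + δ * ∑ s1, Wmat P π s' s1 * V u P δ π i s1 :=
      bellman u P hδ0 hδ1 hP hπ i s'
    by_cases hs' : s' = s
    · subst hs'
      rw [if_pos rfl, Q_eq u P δ π i s' ai]
      have h1 : rvec (u i) (updateEntry π i s' ai t) s' =
          rvec (u i) π s' + (t - π i s' ai) * rvec (u i) (devPolicy π i ai) s' := by
        have := rvec_updateEntry u π i s' ai t s'
        rwa [if_pos rfl] at this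
      have h2 : ∑ s1, Wmat P (updateEntry π i s' ai t) s' s1 * V u P δ π i s1 =
          ∑ s1, Wmat P π s' s1 * V u P δ π i s1 +
            (t - π i s' ai) * ∑ s1, Wmat P (devPolicy π i ai) s' s1 * V u P δ π i s1 := by
        rw [Finset.mul_sum, ← Finset.sum_add_distrib]
        refine Finset.sum_congr rfl fun s1 _ => ?_
        have := Wmat_updateEntry P π i s' ai t s' s1
        rw [if_pos rfl] at this
        rw [this]; ring
      rw [h1, h2]
      nth_rewrite 1 [hbell]
      ring
    · rw [if_neg hs']
      have h1 : rvec (u i) (updateEntry π i s ai t) s' = rvec (u i) π s' := by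
        have := rvec_updateEntry u π i s ai t s'
        rwa [if_neg hs', add_zero] at this
      have h2 : ∑ s1, Wmat P (updateEntry π i s ai t) s' s1 * V u P δ π i s1 =
          ∑ s1, Wmat P π s' s1 * V u P δ π i s1 := by
        refine Finset.sum_congr rfl fun s1 _ => ?_
        have := Wmat_updateEntry P π i s ai t s' s1
        rw [if_neg hs', add_zero] at this
        rw [this]
      rw [h1, h2]
      nth_rewrite 1 [hbell]
      ring
  have key : ∀ k : ℕ,
      (δ ^ k * ∑ s', ((Wmat P (updateEntry π i s ai t)) ^ k) s0 s' *
          rvec (u i) (updateEntry π i s ai t) s') + (h (k + 1) - h k)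
        = ((t - π i s ai) * Q u P δ π i s ai) *
            (δ ^ k * ((Wmat P (updateEntry π i s ai t)) ^ k) s0 s) := by
    intro k
    have hexp : h (k + 1) = δ ^ (k + 1) *
        ∑ s', ((Wmat P (updateEntry π i s ai t)) ^ k) s0 s' *
          ∑ s1, Wmat P (updateEntry π i s ai t) s' s1 * V u P δ π i s1 := by
      show δ ^ (k+1) * ∑ s1, ((Wmat P (updateEntry π i s ai t)) ^ (k+1)) s0 s1 *
        V u P δ π i s1 = _
      rw [pow_succ (Wmat P (updateEntry π i s ai t)) k]
      simp only [Matrix.mul_apply, Finset.sum_mul, Finset.mul_sum]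
      rw [Finset.sum_comm]
      exact Finset.sum_congr rfl fun x _ => Finset.sum_congr rfl fun y _ => by ring
    have hsplit : ∑ s', ((Wmat P (updateEntry π i s ai t)) ^ k) s0 s' *
        (rvec (u i) (updateEntry π i s ai t) s' +
          δ * ∑ s1, Wmat P (updateEntry π i s ai t) s' s1 * V u P δ π i s1 -
            V u P δ π i s')
        = (∑ s', ((Wmat P (updateEntry π i s ai t)) ^ k) s0 s' *
              rvec (u i) (updateEntry π i s ai t) s')
          + δ * (∑ s', ((Wmat P (updateEntry π i s ai t)) ^ k) s0 s' *
              ∑ s1, Wmat P (updateEntry π i s ai t) s' s1 * V u P δ π i s1)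
          - ∑ s', ((Wmat P (updateEntry π i s ai t)) ^ k) s0 s' * V u P δ π i s' := by
      rw [Finset.mul_sum, ← Finset.sum_add_distrib, ← Finset.sum_sub_distrib]
      exact Finset.sum_congr rfl fun s' _ => by ring
    have hite : ∑ s', ((Wmat P (updateEntry π i s ai t)) ^ k) s0 s' *
        (if s' = s then (t - π i s ai) * Q u P δ π i s ai else 0)
        = ((Wmat P (updateEntry π i s ai t)) ^ k) s0 s *
            ((t - π i s ai) * Q u P δ π i s ai) := by
      simp only [mul_ite, mul_zero]
      rw [Finset.sum_ite_eq' Finset.univ s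
        (fun s' => ((Wmat P (updateEntry π i s ai t)) ^ k) s0 s' *
          ((t - π i s ai) * Q u P δ π i s ai))]
      simp
    calc (δ ^ k * ∑ s', ((Wmat P (updateEntry π i s ai t)) ^ k) s0 s' *
          rvec (u i) (updateEntry π i s ai t) s') + (h (k + 1) - h k)
        = δ ^ k * ∑ s', ((Wmat P (updateEntry π i s ai t)) ^ k) s0 s' *
            (rvec (u i) (updateEntry π i s ai t) s' +
              δ * ∑ s1, Wmat P (updateEntry π i s ai t) s' s1 * V u P δ π i s1 -
                V u P δ π i s') := by
          rw [hsplit, hexp, hhdef]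
          ring
      _ = δ ^ k * ∑ s', ((Wmat P (updateEntry π i s ai t)) ^ k) s0 s' *
            (if s' = s then (t - π i s ai) * Q u P δ π i s ai else 0) := by
          refine congrArg _ (Finset.sum_congr rfl fun s' _ => ?_)
          rw [hg s']
      _ = ((t - π i s ai) * Q u P δ π i s ai) *
            (δ ^ k * ((Wmat P (updateEntry π i s ai t)) ^ k) s0 s) := by
          rw [hite]; ring
  have hT : ∑' k : ℕ, ((δ ^ k * ∑ s', ((Wmat P (updateEntry π i s ai t)) ^ k) s0 s' *
        rvec (u i) (updateEntry π i s ai t) s') + (h (k + 1) - h k))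
      = V u P δ (updateEntry π i s ai t) i s0 - V u P δ π i s0 := by
    rw [Summable.tsum_add hsum_r hsum_tel]
    have h2 : ∑' k : ℕ, (h (k + 1) - h k) = 0 - h 0 := by
      refine HasSum.tsum_eq ?_
      refine (hsum_tel.hasSum_iff_tendsto_nat).2 ?_
      have heq : (fun n => ∑ k ∈ Finset.range n, (h (k + 1) - h k))
          = fun n => h n - h 0 := by
        funext n; exact Finset.sum_range_sub h n
      rw [heq]
      simpa using htend.sub_const (h 0)
    have h3 : h 0 = V u P δ π i s0 := by
      rw [hhdef]
      simp [Matrix.one_apply, Finset.sum_ite_eq]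
    rw [h2, h3, ← V_eq_tsum]
    ring
  rw [← hT, tsum_congr key, tsum_mul_left]

/-- potential-gradient identity: in a Markov potential game with
potential `Φ` (differentiable in policy entries, i.e. the potential property is
required along unilateral deviations of each player's policy), the partial
derivatives of `Φ(μ,·)` and of `V_i(μ,·)` in the entry `π_i(s,a_i)` agree and
equal `(1/(1-δ)) d_μ^π(s) Q_i(s,a_i;π)`. -/
theorem potential_gradient (u : I → S → (∀ i, A i) → ℝ)
    (P : S → (∀ i, A i) → S → ℝ) (δ : ℝ)
    (Φ : S → (∀ i, S → A i → ℝ) → ℝ)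
    (hδ0 : 0 < δ) (hδ1 : δ < 1) (hP : IsKernel P)
    (hpot : ∀ (s : S) (i : I) (πi' : S → A i → ℝ) (π : ∀ j, S → A j → ℝ),
      Φ s (Function.update π i πi') - Φ s π =
        V u P δ (Function.update π i πi') i s - V u P δ π i s)
    (π : ∀ i, S → A i → ℝ) (hπ : IsPolicy π) (μ : S → ℝ) (hμ : simplex μ)
    (i : I) (s : S) (ai : A i) :
    HasDerivAt (fun t => ∑ s', μ s' * Φ s' (updateEntry π i s ai t))
        (1 / (1 - δ) * dvisit P δ π μ s * Q u P δ π i s ai) (π i s ai) ∧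
      HasDerivAt (fun t => Vmu u P δ (updateEntry π i s ai t) i μ)
        (1 / (1 - δ) * dvisit P δ π μ s * Q u P δ π i s ai) (π i s ai) := by
  classical
  have h1δ : (0:ℝ) < 1 - δ := by linarith
  set Df : ℝ → ℝ := fun t => ∑ s0, μ s0 *
    ∑' k : ℕ, δ ^ k * ((Wmat P (updateEntry π i s ai t)) ^ k) s0 s with hDf
  have hupd : updateEntry π i s ai (π i s ai) = π := updateEntry_self π i s ai
  have hdvisit : dvisit P δ π μ s = (1 - δ) * Df (π i s ai) := by
    unfold dvisit
    congr 1
    simp only [hDf, hupd]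
    refine Finset.sum_congr rfl fun s0 _ => ?_
    exact congrArg (fun x => μ s0 * x) (tsum_congr fun k =>
      congrArg (fun x => δ ^ k * x) (iterate_stepDist P π s0 k s))
  have hval : 1 / (1 - δ) * dvisit P δ π μ s * Q u P δ π i s ai
      = Q u P δ π i s ai * Df (π i s ai) := by
    rw [hdvisit]
    field_simp
  have hdiff : ∀ t : ℝ, δ * (1 + |t - π i s ai|) < 1 →
      Vmu u P δ (updateEntry π i s ai t) i μ - Vmu u P δ π i μ
        = (t - π i s ai) * (Q u P δ π i s ai * Df t) := by
    intro t hct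
    unfold Vmu
    rw [← Finset.sum_sub_distrib]
    simp only [hDf, Finset.mul_sum]
    refine Finset.sum_congr rfl fun s0 _ => ?_
    rw [← mul_sub, V_diff u P hδ0 hδ1 hP hπ i s ai t hct s0]
    ring
  set ε : ℝ := (1 - δ) / (2 * δ) with hεdef
  have hε0 : 0 < ε := div_pos (by linarith) (by linarith)
  have hq1 : δ * (1 + ε) < 1 := by
    have hee : δ * ε = (1 - δ) / 2 := by
      rw [hεdef]; field_simp
    have : δ * (1 + ε) = δ + δ * ε := by ring
    rw [this, hee]
    linarith
  have hq0 : (0:ℝ) ≤ δ * (1 + ε) := by positivity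
  have hball : ∀ᶠ t : ℝ in nhds (π i s ai), |t - π i s ai| < ε := by
    have h1 : Set.Ioo (π i s ai - ε) (π i s ai + ε) ∈ nhds (π i s ai) :=
      Ioo_mem_nhds (by linarith) (by linarith)
    filter_upwards [h1] with t ht
    exact abs_lt.2 ⟨by linarith [ht.1], by linarith [ht.2]⟩
  have hWcont : Continuous (fun t : ℝ => Wmat P (updateEntry π i s ai t)) := by
    have hWeq : (fun t : ℝ => Wmat P (updateEntry π i s ai t)) =
        fun t => Wmat P π + (t - π i s ai) • Matrix.of (fun s0 s' : S =>
          if s0 = s then Wmat P (devPolicy π i ai) s0 s' else 0) := by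
      funext t
      ext s0 s'
      simp only [Matrix.add_apply, Matrix.smul_apply, Matrix.of_apply, smul_eq_mul,
        Wmat_updateEntry P π i s ai t s0 s', mul_ite, mul_zero]
    rw [hWeq]
    exact continuous_const.add
      ((continuous_id.sub continuous_const).smul continuous_const)
  have hcont : ContinuousAt Df (π i s ai) := by
    have hterm : ∀ s0 : S, Filter.Tendsto
        (fun t => ∑' k : ℕ, δ ^ k * ((Wmat P (updateEntry π i s ai t)) ^ k) s0 s)
        (nhds (π i s ai))
        (nhds (∑' k : ℕ, δ ^ k *
          ((Wmat P (updateEntry π i s ai (π i s ai))) ^ k) s0 s)) := by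
      intro s0
      refine tendsto_tsum_of_dominated_convergence
        (bound := fun k : ℕ => (δ * (1 + ε)) ^ k)
        (summable_geometric_of_lt_one hq0 hq1) (fun k => ?_) ?_
      · exact (continuous_const.mul ((continuous_apply s).comp
          ((continuous_apply s0).comp (hWcont.pow k)))).tendsto _
      · filter_upwards [hball] with t ht k
        have hrow : RowB (Wmat P (updateEntry π i s ai t)) (1 + ε) :=
          (rowB_Wmat_updateEntry hP hπ i s ai t).mono (by linarith)
        have hent := (hrow.pow (by linarith : (0:ℝ) ≤ 1 + ε) k).entry s0 s
        calc ‖δ ^ k * ((Wmat P (updateEntry π i s ai t)) ^ k) s0 s‖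
            = δ ^ k * |((Wmat P (updateEntry π i s ai t)) ^ k) s0 s| := by
              rw [Real.norm_eq_abs, abs_mul, abs_pow, abs_of_nonneg hδ0.le]
          _ ≤ δ ^ k * (1 + ε) ^ k :=
              mul_le_mul_of_nonneg_left hent (pow_nonneg hδ0.le k)
          _ = (δ * (1 + ε)) ^ k := (mul_pow _ _ k).symm
    exact tendsto_finset_sum Finset.univ
      (fun s0 _ => (hterm s0).const_mul (μ s0))
  have key2 : HasDerivAt (fun t => Vmu u P δ (updateEntry π i s ai t) i μ)
      (Q u P δ π i s ai * Df (π i s ai)) (π i s ai) := by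
    rw [hasDerivAt_iff_tendsto_slope]
    have hev : slope (fun t => Vmu u P δ (updateEntry π i s ai t) i μ) (π i s ai)
        =ᶠ[nhdsWithin (π i s ai) {π i s ai}ᶜ] fun t => Q u P δ π i s ai * Df t := by
      have hball2 : ∀ᶠ t in nhdsWithin (π i s ai) {π i s ai}ᶜ, |t - π i s ai| < ε :=
        eventually_nhdsWithin_of_eventually_nhds hball
      filter_upwards [hball2, self_mem_nhdsWithin] with t hlt hne
      have hne' : t ≠ π i s ai := hne
      have hct : δ * (1 + |t - π i s ai|) < 1 := by
        have hmul : δ * (1 + |t - π i s ai|) < δ * (1 + ε) := by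
          apply mul_lt_mul_of_pos_left _ hδ0
          linarith
        linarith
      have htne : t - π i s ai ≠ 0 := sub_ne_zero.2 hne'
      rw [slope_def_field]
      have hft0 : Vmu u P δ (updateEntry π i s ai (π i s ai)) i μ
          = Vmu u P δ π i μ := by rw [hupd]
      rw [hft0, hdiff t hct, mul_div_cancel_left₀ _ htne]
    exact Filter.Tendsto.congr' hev.symm
      (((hcont.mono_left nhdsWithin_le_nhds)).const_mul _)
  constructor
  · rw [hval]
    have hfun : (fun t => ∑ s', μ s' * Φ s' (updateEntry π i s ai t))
        = fun t => Vmu u P δ (updateEntry π i s ai t) i μ +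
            ∑ s', μ s' * (Φ s' π - V u P δ π i s') := by
      funext t
      unfold Vmu
      rw [← Finset.sum_add_distrib]
      refine Finset.sum_congr rfl fun s' _ => ?_
      have hp : Φ s' (updateEntry π i s ai t) - Φ s' π
          = V u P δ (updateEntry π i s ai t) i s' - V u P δ π i s' :=
        hpot s' i (fun s'' b => if s'' = s ∧ b = ai then t else π i s'' b) π
      linear_combination μ s' * hp
    rw [hfun]
    exact key2.add_const _
  · rw [hval]
    exact key2

end MPG
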